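/- Let α ∈ (0,1), κ ∈ (0, 1/2], A ≥ 0, B ≥ 0, 0 < ε₀ ≤ D, M ≥ 0, and let ω : (0, D] → [0, ∞) be a nondecreasing function with ω ≤ M satisfying ω(r) ≤ max{ A r^α , B r^α + κ ω(2r) + (1 − 2κ) ω(r) } for every r ∈ (0, ε₀]. Then there exists a constant C > 0, depending only on α, κ, A, B, M, ε₀ and D, such that ω(r) ≤ C r^α for all r ∈ (0, D]. -/
import Mathlib


/-- The iterated (dyadic) form of the functional inequality: a bounded
nondecreasing function `ω` on `(0, D]` satisfying
`ω(r) ≤ max { A r^α , B r^α + κ ω(2r) + (1 - 2κ) ω(r) }` for `r ∈ (0, ε₀]`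
obeys a global Hölder bound `ω(r) ≤ C r^α` on `(0, D]`. -/
theorem stmt_5
    (α κ A B ε₀ D M : ℝ) (ω : ℝ → ℝ)
    (hα : α ∈ Set.Ioo (0:ℝ) 1) (hκ : κ ∈ Set.Ioc (0:ℝ) (1/2))
    (hA : 0 ≤ A) (hB : 0 ≤ B) (hε₀ : 0 < ε₀) (hε₀D : ε₀ ≤ D) (hM : 0 ≤ M)
    (hωnn : ∀ r : ℝ, 0 < r → r ≤ D → 0 ≤ ω r)
    (hωmono : ∀ r s : ℝ, 0 < r → r ≤ s → s ≤ D → ω r ≤ ω s)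
    (hωM : ∀ r : ℝ, 0 < r → r ≤ D → ω r ≤ M)
    (hineq : ∀ r : ℝ, 0 < r → r ≤ ε₀ →
      ω r ≤ max (A * r ^ α) (B * r ^ α + κ * ω (2 * r) + (1 - 2 * κ) * ω r)) :
    ∃ C > 0, ∀ r : ℝ, 0 < r → r ≤ D → ω r ≤ C * r ^ α := by
  obtain ⟨hα0, hα1⟩ := hα
  obtain ⟨hκ0, hκ2⟩ := hκ
  obtain ⟨A', hA'⟩ : ∃ x : ℝ, x = A + B / (2 * κ) := ⟨_, rfl⟩
  have hκpos : (0:ℝ) < 2 * κ := by linarith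
  have hBκ : 0 ≤ B / (2 * κ) := by positivity
  have hA'nn : 0 ≤ A' := by rw [hA']; linarith
  have h2a : (2:ℝ) ^ α < 2 := by
    calc (2:ℝ) ^ α < 2 ^ (1:ℝ) :=
          (Real.rpow_lt_rpow_left_iff (by norm_num)).mpr hα1
      _ = 2 := Real.rpow_one 2
  have h2apos : (0:ℝ) < 2 ^ α := Real.rpow_pos_of_pos (by norm_num) α
  obtain ⟨t, ht⟩ : ∃ x : ℝ, x = 1 - (2:ℝ) ^ α / 2 := ⟨_, rfl⟩
  have ht0 : 0 < t := by rw [ht]; linarith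
  have hε2 : (0:ℝ) < ε₀ / 2 := by linarith
  have hpow : 0 < (ε₀ / 2) ^ α := Real.rpow_pos_of_pos hε2 α
  obtain ⟨C, hC⟩ : ∃ x : ℝ, x = max (M / (ε₀ / 2) ^ α) (A' / t) + 1 := ⟨_, rfl⟩
  have hCge1 : (0:ℝ) ≤ max (M / (ε₀ / 2) ^ α) (A' / t) :=
    le_max_of_le_left (by positivity)
  have hC0 : 0 < C := by rw [hC]; linarith
  have hCM : M / (ε₀ / 2) ^ α ≤ C := by
    rw [hC]; linarith [le_max_left (M / (ε₀ / 2) ^ α) (A' / t)]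
  have hCA : A' / t ≤ C := by
    rw [hC]; linarith [le_max_right (M / (ε₀ / 2) ^ α) (A' / t)]
  refine ⟨C, hC0, ?_⟩
  -- the single-step inequality
  have hstep : ∀ r, 0 < r → r ≤ ε₀ / 2 → ω r ≤ A' * r ^ α + ω (2 * r) / 2 := by
    intro r hr hr2
    have h2r : 0 < 2 * r := by linarith
    have h2rD : 2 * r ≤ D := by linarith
    have hω2 : 0 ≤ ω (2 * r) := hωnn _ h2r h2rD
    have hrpow : 0 < r ^ α := Real.rpow_pos_of_pos hr α
    have hmx := hineq r hr (by linarith)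
    rcases le_or_gt (ω r) (A * r ^ α) with h | h
    · have hAA : A * r ^ α ≤ A' * r ^ α := by
        apply mul_le_mul_of_nonneg_right _ hrpow.le
        rw [hA']; linarith
      linarith
    · have h2 : ω r ≤ B * r ^ α + κ * ω (2 * r) + (1 - 2 * κ) * ω r := by
        rcases max_choice (A * r ^ α) (B * r ^ α + κ * ω (2 * r) + (1 - 2 * κ) * ω r)
          with hm | hm
        · rw [hm] at hmx; linarith
        · rw [hm] at hmx; exact hmx
      have h3 : 2 * κ * ω r ≤ B * r ^ α + κ * ω (2 * r) := by nlinarith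
      have h4 : ω r ≤ (B * r ^ α + κ * ω (2 * r)) / (2 * κ) := by
        rw [le_div_iff₀ hκpos]; linarith
      have heq : A' * r ^ α + ω (2 * r) / 2
          = A * r ^ α + (B * r ^ α + κ * ω (2 * r)) / (2 * κ) := by
        rw [hA']; field_simp; ring
      rw [heq]
      nlinarith [mul_nonneg hA hrpow.le]
  -- base case: r > ε₀/2
  have hbase : ∀ r, 0 < r → r ≤ D → ε₀ / 2 < r → ω r ≤ C * r ^ α := by
    intro r hr hrD hlow
    have hmono : (ε₀ / 2) ^ α ≤ r ^ α := Real.rpow_le_rpow hε2.le hlow.le hα0.le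
    have hM2 : M ≤ C * (ε₀ / 2) ^ α := (div_le_iff₀ hpow).mp hCM
    calc ω r ≤ M := hωM r hr hrD
      _ ≤ C * (ε₀ / 2) ^ α := hM2
      _ ≤ C * r ^ α := mul_le_mul_of_nonneg_left hmono hC0.le
  -- main induction
  have main : ∀ n : ℕ, ∀ r, 0 < r → r ≤ D → ε₀ / 2 / 2 ^ n < r → ω r ≤ C * r ^ α := by
    intro n
    induction n with
    | zero =>
      intro r hr hrD hlow
      exact hbase r hr hrD (by simpa using hlow)
    | succ n ih =>
      intro r hr hrD hlow
      rcases le_or_gt r (ε₀ / 2) with hcase | hcase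
      · have h2r : 0 < 2 * r := by linarith
        have h2rD : 2 * r ≤ D := by linarith
        have h2n : (0:ℝ) < 2 ^ n := by positivity
        have hlow2 : ε₀ / 2 / 2 ^ n < 2 * r := by
          have e : ε₀ / 2 / 2 ^ (n + 1) = ε₀ / 2 / 2 ^ n / 2 := by
            rw [pow_succ]; ring
          rw [e] at hlow
          linarith
        have hih := ih (2 * r) h2r h2rD hlow2
        have hst := hstep r hr hcase
        have hrw : (2 * r) ^ α = 2 ^ α * r ^ α := Real.mul_rpow (by norm_num) hr.le
        rw [hrw] at hih
        have hrpow : 0 < r ^ α := Real.rpow_pos_of_pos hr α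
        have hCt : A' ≤ C * t := by
          calc A' = A' / t * t := by field_simp
            _ ≤ C * t := mul_le_mul_of_nonneg_right hCA ht0.le
        have key : A' + C * (2:ℝ) ^ α / 2 ≤ C := by
          have e2 : C * t = C - C * (2:ℝ) ^ α / 2 := by rw [ht]; ring
          rw [e2] at hCt; linarith
        calc ω r ≤ A' * r ^ α + (C * ((2:ℝ) ^ α * r ^ α)) / 2 := by linarith
          _ = (A' + C * (2:ℝ) ^ α / 2) * r ^ α := by ring
          _ ≤ C * r ^ α := mul_le_mul_of_nonneg_right key hrpow.le
      · exact hbase r hr hrD hcase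
  intro r hr hrD
  obtain ⟨n, hn⟩ := pow_unbounded_of_one_lt (ε₀ / 2 / r) (one_lt_two (α := ℝ))
  refine main n r hr hrD ?_
  have h2n : (0:ℝ) < 2 ^ n := by positivity
  rw [div_lt_iff₀ hr] at hn
  rw [div_lt_iff₀ h2n]
  linarith [hn]
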